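/- For X > 0 and Y ∈ ℝ, Σ_{n∈ℤ} e^{−πn²X} e^{2πinY} = Π_{n=1}^∞ (1 − e^{−2πnX})(1 + e^{−2(2n−1)πX} + 2e^{−(2n−1)πX}cos(2πY)). -/

import Mathlib

open Real Filter Finset

set_option linter.unusedSectionVars false

noncomputable def jtpE (t : ℝ) (N : ℕ) : ℝ := ∏ j ∈ Finset.range N, (1 - t ^ (j + 1))

noncomputable def jtpEinf (t : ℝ) : ℝ := ∏' j : ℕ, (1 - t ^ (j + 1))

noncomputable def jtpGB (t : ℝ) (m k : ℕ) : ℝ :=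
  if k ≤ m then jtpE t m / (jtpE t k * jtpE t (m - k)) else 0

section Elemmas
variable {t : ℝ} (ht0 : 0 < t) (ht1 : t < 1)
include ht0 ht1

lemma jtp_factor_pos (j : ℕ) : 0 < 1 - t ^ (j + 1) := by
  have : t ^ (j+1) < 1 := pow_lt_one₀ ht0.le ht1 (Nat.succ_ne_zero j)
  linarith

lemma jtp_factor_le_one (j : ℕ) : 1 - t ^ (j + 1) ≤ 1 := by
  have : 0 < t ^ (j+1) := pow_pos ht0 _
  linarith

lemma jtpE_pos (N : ℕ) : 0 < jtpE t N :=
  Finset.prod_pos fun j _ => jtp_factor_pos ht0 ht1 j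

lemma jtpE_le_one (N : ℕ) : jtpE t N ≤ 1 :=
  Finset.prod_le_one (fun j _ => (jtp_factor_pos ht0 ht1 j).le)
    (fun j _ => jtp_factor_le_one ht0 ht1 j)

lemma jtp_summable_log : Summable fun j : ℕ => Real.log (1 - t ^ (j + 1)) := by
  rw [← summable_abs_iff]
  have hgeo : Summable fun j : ℕ => (1 - t)⁻¹ * t ^ (j + 1) := by
    apply Summable.mul_left
    exact ((summable_geometric_of_lt_one ht0.le ht1).mul_left t).congr (by
      intro j; rw [pow_succ, mul_comm])
  refine hgeo.of_nonneg_of_le (fun j => abs_nonneg _) (fun j => ?_)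
  have hx := jtp_factor_pos ht0 ht1 j
  have hlog : Real.log (1 - t ^ (j + 1)) ≤ 0 := by
    apply Real.log_nonpos hx.le (jtp_factor_le_one ht0 ht1 j)
  rw [abs_of_nonpos hlog]
  have h1 := Real.one_sub_inv_le_log_of_pos hx
  have h2 : (1 - t ^ (j+1))⁻¹ - 1 ≤ (1-t)⁻¹ * t ^ (j+1) := by
    have htj : t ^ (j + 1) ≤ t := pow_le_of_le_one ht0.le ht1.le (Nat.succ_ne_zero j)
    have h3 : 0 < 1 - t := by linarith
    have h4 : 1 - t ≤ 1 - t ^ (j+1) := by linarith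
    rw [inv_eq_one_div, div_sub' hx.ne', div_le_iff₀ hx]
    calc 1 - (1 - t ^ (j+1)) * 1 = t ^ (j+1) := by ring
    _ ≤ (1-t)⁻¹ * t ^ (j+1) * (1 - t) := by
        rw [mul_comm ((1-t)⁻¹) _, mul_assoc, inv_mul_cancel₀ h3.ne', mul_one]
    _ ≤ (1-t)⁻¹ * t ^ (j+1) * (1 - t ^ (j+1)) := by
        apply mul_le_mul_of_nonneg_left h4
        positivity
  linarith

lemma jtpE_hasProd : HasProd (fun j : ℕ => 1 - t ^ (j + 1)) (jtpEinf t) := by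
  have := (Real.multipliable_of_summable_log (fun j => jtp_factor_pos ht0 ht1 j)
    (jtp_summable_log ht0 ht1)).hasProd
  exact this

lemma jtpEinf_pos : 0 < jtpEinf t := by
  have h2 := Real.rexp_tsum_eq_tprod (fun j => jtp_factor_pos ht0 ht1 j)
    (jtp_summable_log ht0 ht1)
  rw [jtpEinf, ← h2]
  exact Real.exp_pos _

lemma jtpE_tendsto : Tendsto (jtpE t) atTop (nhds (jtpEinf t)) :=
  (jtpE_hasProd ht0 ht1).tendsto_prod_nat

lemma jtpEinf_le (N : ℕ) : jtpEinf t ≤ jtpE t N := by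
  refine le_of_tendsto (jtpE_tendsto ht0 ht1) (Filter.eventually_atTop.mpr ⟨N, fun M hM => ?_⟩)
  obtain ⟨k, rfl⟩ : ∃ k, M = N + k := ⟨M - N, by omega⟩
  rw [jtpE, jtpE, Finset.prod_range_add]
  calc (∏ j ∈ range N, (1 - t ^ (j+1))) * ∏ j ∈ range k, (1 - t ^ (N + j + 1))
      ≤ (∏ j ∈ range N, (1 - t ^ (j+1))) * 1 := by
        apply mul_le_mul_of_nonneg_left _ (jtpE_pos ht0 ht1 N).le
        apply Finset.prod_le_one (fun j _ => ?_) (fun j _ => ?_)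
        · have : t ^ (N + j + 1) < 1 := pow_lt_one₀ ht0.le ht1 (by omega)
          linarith
        · have : 0 < t ^ (N + j + 1) := pow_pos ht0 _
          linarith
    _ = ∏ j ∈ range N, (1 - t ^ (j+1)) := mul_one _

end Elemmas

section GB
variable {t : ℝ} (ht0 : 0 < t) (ht1 : t < 1)
include ht0 ht1

lemma jtpE_pos' (N : ℕ) : 0 < jtpE t N := by
  apply Finset.prod_pos; intro j _
  have : t ^ (j+1) < 1 := pow_lt_one₀ ht0.le ht1 (Nat.succ_ne_zero j)
  linarith

lemma jtpE_zero' : jtpE t 0 = 1 := Finset.prod_range_zero _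

lemma jtpE_succ' (N : ℕ) : jtpE t (N+1) = jtpE t N * (1 - t ^ (N+1)) :=
  Finset.prod_range_succ _ _

lemma jtpGB_zero (m : ℕ) : jtpGB t m 0 = 1 := by
  rw [jtpGB, if_pos (Nat.zero_le m), jtpE_zero' ht0 ht1, Nat.sub_zero, one_mul,
    div_self (jtpE_pos' ht0 ht1 m).ne']

lemma jtpGB_self (m : ℕ) : jtpGB t m m = 1 := by
  rw [jtpGB, if_pos le_rfl, Nat.sub_self, jtpE_zero' ht0 ht1, mul_one,
    div_self (jtpE_pos' ht0 ht1 m).ne']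

lemma jtpGB_top (m : ℕ) : jtpGB t m (m+1) = 0 := by
  rw [jtpGB, if_neg (by omega)]

lemma jtpGB_nonneg (m k : ℕ) : 0 ≤ jtpGB t m k := by
  rw [jtpGB]; split
  · exact (div_nonneg (jtpE_pos' ht0 ht1 m).le
      (mul_nonneg (jtpE_pos' ht0 ht1 k).le (jtpE_pos' ht0 ht1 (m-k)).le))
  · exact le_rfl

lemma jtpGB_pascal {m k : ℕ} (hk : k ≤ m) :
    jtpGB t (m+1) (k+1) = jtpGB t m (k+1) + t ^ (m-k) * jtpGB t m k := by
  rcases eq_or_lt_of_le hk with rfl | hkm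
  · rw [jtpGB_self ht0 ht1, jtpGB_top ht0 ht1, jtpGB_self ht0 ht1, Nat.sub_self,
      pow_zero, zero_add, one_mul]
  · have hk1m : k + 1 ≤ m := hkm
    have e1 : m + 1 - (k+1) = m - k := by omega
    have e2 : m - k = (m - k - 1) + 1 := by omega
    have e3 : m - (k+1) = m - k - 1 := by omega
    have hEm1 : jtpE t (m+1) = jtpE t m * (1 - t ^ (m+1)) := jtpE_succ' ht0 ht1 m
    have hEk1 : jtpE t (k+1) = jtpE t k * (1 - t ^ (k+1)) := jtpE_succ' ht0 ht1 k
    have hEmk : jtpE t (m-k) = jtpE t (m-(k+1)) * (1 - t ^ (m-k)) := by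
      rw [e3]; conv_lhs => rw [e2]
      rw [jtpE_succ' ht0 ht1 (m-k-1), ← e2]
    rw [jtpGB, jtpGB, jtpGB, if_pos (by omega), if_pos hk1m, if_pos hk, e1, hEm1, hEk1, hEmk]
    have hab : t ^ (m - k) * t ^ (k + 1) = t ^ (m + 1) := by
      rw [← pow_add]; congr 1; omega
    have p1 := (jtpE_pos' ht0 ht1 m).ne'
    have p2 := (jtpE_pos' ht0 ht1 k).ne'
    have p3 := (jtpE_pos' ht0 ht1 (m - k - 1)).ne'
    have p4 : (1:ℝ) - t ^ (k+1) ≠ 0 := by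
      have : t ^ (k+1) < 1 := pow_lt_one₀ ht0.le ht1 (Nat.succ_ne_zero k); linarith
    have p5 : (1:ℝ) - t ^ (m - k) ≠ 0 := by
      have : t ^ (m-k) < 1 := pow_lt_one₀ ht0.le ht1 (by omega); linarith
    have p3' := (jtpE_pos' ht0 ht1 (m - (k+1))).ne'
    have key : (1:ℝ) - t^(m+1) = (1 - t^(m-k)) + t^(m-k)*(1 - t^(k+1)) := by
      linear_combination hab
    rw [key]
    field_simp

lemma jtp_qbinom (m : ℕ) (x : ℂ) :
    ∏ j ∈ range m, (1 + (t:ℂ)^j * x)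
      = ∑ k ∈ range (m+1), (jtpGB t m k : ℂ) * (t:ℂ)^(∑ i ∈ range k, i) * x^k := by
  induction m with
  | zero => simp [jtpGB_zero ht0 ht1]
  | succ m ih =>
    rw [Finset.prod_range_succ, ih]
    set T := (t:ℂ) with hT
    set c : ℕ → ℂ := fun k => (jtpGB t m k : ℂ) * T^(∑ i ∈ range k, i) * x^k with hc
    set d : ℕ → ℂ := fun k => (jtpGB t (m+1) k : ℂ) * T^(∑ i ∈ range k, i) * x^k with hd
    have hext : ∑ k ∈ range (m+1), c k = ∑ k ∈ range (m+2), c k := by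
      rw [Finset.sum_range_succ (n := m+1)]
      simp [hc, jtpGB_top ht0 ht1]
    have key : ∀ k ∈ range (m+1), d (k+1) = c (k+1) + c k * (T^m * x) := by
      intro k hk
      have hkm : k ≤ m := by simpa using Nat.lt_succ_iff.mp (Finset.mem_range.mp hk)
      simp only [hd, hc]
      rw [jtpGB_pascal ht0 ht1 hkm]
      push_cast
      have hS : ∑ i ∈ range (k+1), i = (∑ i ∈ range k, i) + k := Finset.sum_range_succ _ _
      have hexp : T ^ (m - k) * T ^ (∑ i ∈ range (k+1), i) = T ^ (∑ i ∈ range k, i) * T^m := by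
        rw [← pow_add, ← pow_add, hS]; congr 1; omega
      calc ((jtpGB t m (k+1) : ℂ) + (t:ℂ)^(m-k) * (jtpGB t m k : ℂ))
            * T^(∑ i ∈ range (k+1), i) * x^(k+1)
          = (jtpGB t m (k+1) : ℂ) * T^(∑ i ∈ range (k+1), i) * x^(k+1)
            + (jtpGB t m k : ℂ) * (T ^ (m-k) * T^(∑ i ∈ range (k+1), i)) * x^(k+1) := by
            ring
        _ = _ := by rw [hexp]; ring
    calc (∑ k ∈ range (m+1), c k) * (1 + T^m * x)
        = (∑ k ∈ range (m+2), c k) + (∑ k ∈ range (m+1), (c k * (T^m * x))) := by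
          rw [← hext, mul_add, mul_one, Finset.sum_mul]
      _ = ((∑ k ∈ range (m+1), c (k+1)) + c 0) + (∑ k ∈ range (m+1), (c k * (T^m * x))) := by
          rw [Finset.sum_range_succ' c (m+1)]
      _ = (∑ k ∈ range (m+1), (c (k+1) + c k * (T^m * x))) + c 0 := by
          rw [Finset.sum_add_distrib]; ring
      _ = (∑ k ∈ range (m+1), d (k+1)) + d 0 := by
          rw [Finset.sum_congr rfl fun k hk => (key k hk).symm]
          simp [hc, hd, jtpGB_zero ht0 ht1]
      _ = ∑ k ∈ range (m+2), d k := (Finset.sum_range_succ' d (m+1)).symm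

end GB

lemma jtp_sum_odd (N : ℕ) : ∑ j ∈ range N, (2*j+1) = N^2 := by
  induction N with
  | zero => simp
  | succ N ih => rw [Finset.sum_range_succ, ih]; ring

section Finite
variable {q : ℝ} (hq0 : 0 < q) (hq1 : q < 1) {w : ℂ} (hw : w ≠ 0)
include hq0 hq1 hw

lemma jtp_finite (N : ℕ) :
    ∏ j ∈ range N, ((1 - (q:ℂ)^(2*(j+1))) * ((1 + (q:ℂ)^(2*j+1) * w) * (1 + (q:ℂ)^(2*j+1) * w⁻¹)))
    = ∑ k ∈ range (2*N+1),
        ((jtpE (q^2) N * jtpGB (q^2) (2*N) k : ℝ) : ℂ)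
          * (q:ℂ)^((((k:ℤ)-(N:ℤ)).natAbs)^2) * w^((k:ℤ)-(N:ℤ)) := by
  have hQ : (q:ℂ) ≠ 0 := Complex.ofReal_ne_zero.mpr hq0.ne'
  set Q := (q:ℂ) with hQdef
  set g : ℕ → ℂ := fun i => 1 + Q^(2*(i:ℤ)+1-2*(N:ℤ)) * w with hg
  -- step 1: split the product
  rw [Finset.prod_mul_distrib, Finset.prod_mul_distrib]
  -- step 2: E part
  have hE : ∏ j ∈ range N, (1 - Q^(2*(j+1))) = ((jtpE (q^2) N : ℝ) : ℂ) := by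
    rw [jtpE, Complex.ofReal_prod]
    refine Finset.prod_congr rfl fun j _ => ?_
    push_cast
    rw [← pow_mul]
  -- step 3a: plus part
  have hA : ∏ j ∈ range N, (1 + Q^(2*j+1) * w) = ∏ i ∈ range N, g (N + i) := by
    refine Finset.prod_congr rfl fun j _ => ?_
    simp only [hg]
    congr 2
    have : 2*((N + j : ℕ):ℤ)+1-2*(N:ℤ) = ((2*j+1 : ℕ) : ℤ) := by push_cast; ring
    rw [this, zpow_natCast]
  -- step 3b: minus part
  have hB : ∏ j ∈ range N, (1 + Q^(2*j+1) * w⁻¹)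
      = Q^(N^2) * (w⁻¹)^N * ∏ i ∈ range N, g i := by
    have reflect : ∏ i ∈ range N, g i = ∏ j ∈ range N, g (N - 1 - j) :=
      (Finset.prod_range_reflect g N).symm
    have hfac : ∀ j ∈ range N, (1 + Q^(2*j+1) * w⁻¹)
        = Q^(2*j+1) * w⁻¹ * g (N - 1 - j) := by
      intro j hj
      have hjN : j < N := Finset.mem_range.mp hj
      simp only [hg]
      have hcast : 2*((N - 1 - j : ℕ):ℤ)+1-2*(N:ℤ) = -((2*j+1 : ℕ) : ℤ) := by
        have : ((N - 1 - j : ℕ):ℤ) = (N:ℤ) - 1 - j := by omega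
        rw [this]; push_cast; ring
      rw [hcast, zpow_neg, zpow_natCast]
      field_simp
      ring
    rw [Finset.prod_congr rfl hfac, Finset.prod_mul_distrib, Finset.prod_mul_distrib,
      Finset.prod_const, Finset.prod_pow_eq_pow_sum, jtp_sum_odd, ← reflect,
      Finset.card_range]
  rw [hE, hA, hB]
  -- step 4: q-binomial
  have ht0 : (0:ℝ) < q^2 := by positivity
  have ht1 : q^2 < 1 := by nlinarith
  have hx : ∀ i : ℕ, ((q^2 : ℝ) : ℂ)^i * (Q^(1-2*(N:ℤ)) * w) = Q^(2*(i:ℤ)+1-2*(N:ℤ)) * w := by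
    intro i
    have : ((q^2 : ℝ) : ℂ)^i = Q^(2*(i:ℤ)) := by
      rw [Complex.ofReal_pow, ← pow_mul, ← zpow_natCast Q (2*i)]
      congr 1
    rw [this, ← mul_assoc, ← zpow_add₀ hQ]
    congr 2
    ring
  have hprod2N : ∏ i ∈ range (2*N), g i
      = ∑ k ∈ range (2*N+1), (jtpGB (q^2) (2*N) k : ℂ)
          * ((q^2:ℝ):ℂ)^(∑ i ∈ range k, i) * (Q^(1-2*(N:ℤ)) * w)^k := by
    rw [← jtp_qbinom ht0 ht1 (2*N) (Q^(1-2*(N:ℤ)) * w)]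
    refine Finset.prod_congr rfl fun i _ => ?_
    rw [hx i, hg]
  have hsplit : ∏ i ∈ range (2*N), g i = (∏ i ∈ range N, g i) * ∏ i ∈ range N, g (N + i) := by
    rw [two_mul, Finset.prod_range_add]
  -- assemble
  have hre : (↑(jtpE (q^2) N) : ℂ)
        * ((∏ i ∈ range N, g (N+i)) * (Q^(N^2) * w⁻¹^N * ∏ i ∈ range N, g i))
      = ↑(jtpE (q^2) N) * Q^(N^2) * w⁻¹^N
        * ((∏ i ∈ range N, g i) * ∏ i ∈ range N, g (N+i)) := by ring
  rw [hre, ← hsplit, hprod2N, Finset.mul_sum]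
  refine Finset.sum_congr rfl fun k hk => ?_
  have hkle : k ≤ 2*N := by have := Finset.mem_range.mp hk; omega
  -- power juggling
  have hSk : (∑ i ∈ range k, i) * 2 = k * (k-1) := Finset.sum_range_id_mul_two k
  have e1 : ((q^2:ℝ):ℂ)^(∑ i ∈ range k, i) = Q^((2 * ∑ i ∈ range k, i : ℕ) : ℤ) := by
    rw [Complex.ofReal_pow, ← pow_mul, ← zpow_natCast Q (2 * ∑ i ∈ range k, i)]
  have e2 : (Q^(1-2*(N:ℤ)) * w)^k = Q^((1-2*(N:ℤ)) * k) * w^(k:ℤ) := by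
    rw [mul_pow, ← zpow_natCast (Q^(1-2*(N:ℤ))) k, ← zpow_mul, zpow_natCast w k]
  have e3 : Q^(N^2) = Q^((N^2 : ℕ) : ℤ) := (zpow_natCast _ _).symm
  have e4 : (w⁻¹)^N = w^(-(N:ℤ)) := by rw [inv_pow, ← zpow_natCast w N, ← zpow_neg]
  have hzsum : ((N^2 : ℕ) : ℤ) + ((2 * ∑ i ∈ range k, i : ℕ) : ℤ) + (1-2*(N:ℤ)) * k
      = ((k:ℤ) - N)^2 := by
    have h2S : ((2 * ∑ i ∈ range k, i : ℕ) : ℤ) = (k:ℤ) * ((k:ℤ) - 1) := by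
      cases k with
      | zero => simp
      | succ k' =>
        rw [mul_comm 2, hSk, Nat.succ_sub_one]
        push_cast; ring
    rw [h2S]; push_cast; ring
  have e5 : Q^((((k:ℤ)-(N:ℤ)).natAbs)^2) = Q^(((k:ℤ) - N)^2) := by
    rw [← zpow_natCast]
    congr 1
    rw [Nat.cast_pow, Int.natAbs_sq]
  calc ↑(jtpE (q^2) N) * Q^(N^2) * w⁻¹^N
        * ((jtpGB (q^2) (2*N) k : ℂ) * ((q^2:ℝ):ℂ)^(∑ i ∈ range k, i) * (Q^(1-2*(N:ℤ)) * w)^k)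
      = (↑(jtpE (q^2) N) * ↑(jtpGB (q^2) (2*N) k))
        * (Q^((N^2 : ℕ) : ℤ) * Q^((2 * ∑ i ∈ range k, i : ℕ) : ℤ) * Q^((1-2*(N:ℤ)) * k))
        * (w^(-(N:ℤ)) * w^(k:ℤ)) := by rw [e1, e2, e3, e4]; ring
    _ = (↑(jtpE (q^2) N) * ↑(jtpGB (q^2) (2*N) k))
        * Q^(((N^2 : ℕ) : ℤ) + ((2 * ∑ i ∈ range k, i : ℕ) : ℤ) + (1-2*(N:ℤ)) * k)
        * w^(-(N:ℤ) + (k:ℤ)) := by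
          rw [← zpow_add₀ hQ, ← zpow_add₀ hQ, ← zpow_add₀ hw]
    _ = ((jtpE (q^2) N * jtpGB (q^2) (2*N) k : ℝ) : ℂ)
        * Q^((((k:ℤ)-(N:ℤ)).natAbs)^2) * w^((k:ℤ)-(N:ℤ)) := by
          rw [hzsum, e5]
          push_cast
          rw [show -(N:ℤ) + (k:ℤ) = (k:ℤ) - (N:ℤ) by ring]

end Finite

noncomputable def jtpc (q : ℝ) (w : ℂ) (N : ℕ) (n : ℤ) : ℂ :=
  if n.natAbs ≤ N then
    ((jtpE (q^2) N * jtpGB (q^2) (2*N) (n + N).toNat : ℝ) : ℂ)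
      * (q:ℂ)^(n.natAbs^2) * w^n
  else 0

section Analytic
variable {q : ℝ} (hq0 : 0 < q) (hq1 : q < 1) {w : ℂ} (hw : w ≠ 0) (hw1 : ‖w‖ = 1)
include hq0 hq1

private lemma ht0' : (0:ℝ) < q^2 := by positivity
private lemma ht1' : q^2 < 1 := by nlinarith

-- summability of the dominating function
lemma jtp_summable_pow : Summable (fun n : ℤ => q^(n.natAbs^2)) := by
  apply Summable.of_nat_of_neg <;>
  · simp only [Int.natAbs_neg, Int.natAbs_natCast]
    apply (summable_geometric_of_lt_one hq0.le hq1).of_nonneg_of_le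
      (fun n => by positivity) (fun n => ?_)
    exact pow_le_pow_of_le_one hq0.le hq1.le (Nat.le_self_pow (by omega) n)

lemma jtp_coeff_nonneg (N : ℕ) (k : ℕ) : 0 ≤ jtpE (q^2) N * jtpGB (q^2) (2*N) k := by
  have h0 := ht0' hq0 hq1; have h1 := ht1' hq0 hq1
  apply mul_nonneg (jtpE_pos h0 h1 N).le
  rw [jtpGB]; split
  · exact div_nonneg (jtpE_pos h0 h1 _).le
      (mul_nonneg (jtpE_pos h0 h1 _).le (jtpE_pos h0 h1 _).le)
  · exact le_rfl

lemma jtp_coeff_le (N : ℕ) (k : ℕ) :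
    jtpE (q^2) N * jtpGB (q^2) (2*N) k ≤ (jtpEinf (q^2))⁻¹ * (jtpEinf (q^2))⁻¹ := by
  have h0 := ht0' hq0 hq1; have h1 := ht1' hq0 hq1
  have hEinf := jtpEinf_pos h0 h1
  rw [jtpGB]; split
  · rename_i hk
    calc jtpE (q^2) N * (jtpE (q^2) (2*N) / (jtpE (q^2) k * jtpE (q^2) (2*N-k)))
        = jtpE (q^2) N * jtpE (q^2) (2*N) / (jtpE (q^2) k * jtpE (q^2) (2*N-k)) := by ring
      _ ≤ 1 / (jtpEinf (q^2) * jtpEinf (q^2)) := by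
          apply div_le_div₀ zero_le_one
          · exact mul_le_one₀ (jtpE_le_one h0 h1 N) (jtpE_pos h0 h1 _).le (jtpE_le_one h0 h1 _)
          · exact mul_pos hEinf hEinf
          · exact mul_le_mul (jtpEinf_le h0 h1 k) (jtpEinf_le h0 h1 (2*N-k)) hEinf.le
              (jtpE_pos h0 h1 _).le
      _ = (jtpEinf (q^2))⁻¹ * (jtpEinf (q^2))⁻¹ := by rw [one_div, mul_inv]
  · rw [mul_zero]
    exact mul_nonneg (inv_nonneg.mpr hEinf.le) (inv_nonneg.mpr hEinf.le)

include hw1 in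
lemma jtp_norm_w_zpow (n : ℤ) : ‖w ^ n‖ = 1 := by
  rw [norm_zpow, hw1, one_zpow]

include hw1 in
lemma jtpc_bound (N : ℕ) (n : ℤ) :
    ‖jtpc q w N n‖ ≤ ((jtpEinf (q^2))⁻¹ * (jtpEinf (q^2))⁻¹) * q^(n.natAbs^2) := by
  rw [jtpc]
  split
  · rw [norm_mul, norm_mul, jtp_norm_w_zpow hq0 hq1 hw1, mul_one, Complex.norm_real,
      Real.norm_eq_abs, abs_of_nonneg (jtp_coeff_nonneg hq0 hq1 N _)]
    have : ‖(q:ℂ)^(n.natAbs^2)‖ = q^(n.natAbs^2) := by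
      rw [norm_pow, Complex.norm_real, Real.norm_eq_abs, abs_of_pos hq0]
    rw [this]
    exact mul_le_mul_of_nonneg_right (jtp_coeff_le hq0 hq1 N _) (by positivity)
  · simp only [norm_zero]
    have hEinf := jtpEinf_pos (ht0' hq0 hq1) (ht1' hq0 hq1)
    have : (0:ℝ) ≤ q^(n.natAbs^2) := by positivity
    exact mul_nonneg (mul_nonneg (inv_nonneg.mpr hEinf.le) (inv_nonneg.mpr hEinf.le)) this

lemma jtp_summable_bound :
    Summable (fun n : ℤ => ((jtpEinf (q^2))⁻¹ * (jtpEinf (q^2))⁻¹) * q^(n.natAbs^2)) :=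
  (jtp_summable_pow hq0 hq1).mul_left _

-- pointwise limit
lemma jtpc_tendsto (n : ℤ) :
    Tendsto (fun N => jtpc q w N n) atTop (nhds ((q:ℂ)^(n.natAbs^2) * w^n)) := by
  have h0 := ht0' hq0 hq1; have h1 := ht1' hq0 hq1
  have hEinf := jtpEinf_pos h0 h1
  set t := q^2
  -- the real coefficient sequence
  set r : ℕ → ℝ := fun N => jtpE t N * jtpE t (2*N)
    / (jtpE t ((n + N).toNat) * jtpE t (2*N - (n + N).toNat)) with hr
  have hidx1 : Tendsto (fun N : ℕ => (n + (N:ℤ)).toNat) atTop atTop := by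
    apply tendsto_atTop_atTop.mpr
    intro b
    exact ⟨b + n.natAbs, fun a ha => by omega⟩
  have hidx2 : Tendsto (fun N : ℕ => 2*N - (n + (N:ℤ)).toNat) atTop atTop := by
    apply tendsto_atTop_atTop.mpr
    intro b
    exact ⟨b + n.natAbs, fun a ha => by omega⟩
  have hE2N : Tendsto (fun N : ℕ => jtpE t (2*N)) atTop (nhds (jtpEinf t)) :=
    (jtpE_tendsto h0 h1).comp (tendsto_atTop_atTop.mpr fun b => ⟨b, fun a ha => by omega⟩)
  have hrlim : Tendsto r atTop (nhds 1) := by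
    have hnum : Tendsto (fun N : ℕ => jtpE t N * jtpE t (2*N)) atTop
        (nhds (jtpEinf t * jtpEinf t)) := (jtpE_tendsto h0 h1).mul hE2N
    have hden : Tendsto (fun N : ℕ => jtpE t ((n + N).toNat) * jtpE t (2*N - (n + N).toNat))
        atTop (nhds (jtpEinf t * jtpEinf t)) :=
      ((jtpE_tendsto h0 h1).comp hidx1).mul ((jtpE_tendsto h0 h1).comp hidx2)
    have := hnum.div hden (by positivity)
    rwa [div_self (by positivity : jtpEinf t * jtpEinf t ≠ 0)] at this
  have hclim : Tendsto (fun N => ((r N : ℝ) : ℂ) * ((q:ℂ)^(n.natAbs^2) * w^n)) atTop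
      (nhds ((q:ℂ)^(n.natAbs^2) * w^n)) := by
    have : Tendsto (fun N => ((r N : ℝ) : ℂ)) atTop (nhds ((1:ℝ):ℂ)) :=
      (Complex.continuous_ofReal.tendsto 1).comp hrlim
    simpa using this.mul_const ((q:ℂ)^(n.natAbs^2) * w^n)
  apply hclim.congr'
  filter_upwards [Filter.eventually_atTop.mpr ⟨n.natAbs, fun N hN => hN⟩] with N hN
  have hcond : n.natAbs ≤ N := hN
  have hk2N : (n + (N:ℤ)).toNat ≤ 2*N := by omega
  rw [jtpc, if_pos hcond, jtpGB, if_pos hk2N]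
  have : 2*N - (n + (N:ℤ)).toNat = 2*N - (n+N).toNat := rfl
  push_cast [hr]
  ring
end Analytic

lemma jtpc_tsum (q : ℝ) (w : ℂ) (N : ℕ) :
    ∑' n : ℤ, jtpc q w N n
    = ∑ k ∈ range (2*N+1),
        ((jtpE (q^2) N * jtpGB (q^2) (2*N) k : ℝ) : ℂ)
          * (q:ℂ)^((((k:ℤ)-(N:ℤ)).natAbs)^2) * w^((k:ℤ)-(N:ℤ)) := by
  have hinj : Function.Injective (fun k : ℕ => (k:ℤ) - N) := by
    intro a b h; simpa using h
  rw [tsum_eq_sum (s := (range (2*N+1)).map ⟨fun k : ℕ => (k:ℤ) - N, hinj⟩) ?_]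
  · rw [Finset.sum_map]
    refine Finset.sum_congr rfl fun k hk => ?_
    have hk' : k < 2*N+1 := Finset.mem_range.mp hk
    have h1 : ((k:ℤ) - N).natAbs ≤ N := by omega
    have h2 : (((k:ℤ) - N) + N).toNat = k := by omega
    simp only [Function.Embedding.coeFn_mk, jtpc, if_pos h1, h2]
  · intro n hn
    rw [jtpc, if_neg]
    intro hcon
    apply hn
    rw [Finset.mem_map]
    refine ⟨(n + N).toNat, Finset.mem_range.mpr (by omega), ?_⟩
    simp only [Function.Embedding.coeFn_mk]
    omega

noncomputable def jtpR (q c : ℝ) (n : ℕ) : ℝ :=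
  (1 - q^(2*(n+1))) * (1 + q^(2*(2*n+1)) + 2*q^(2*n+1)*c)

section Rlemmas
variable {q c : ℝ} (hq0 : 0 < q) (hq1 : q < 1) (hc : |c| ≤ 1)
include hq0 hq1 hc

lemma jtpR_pos (n : ℕ) : 0 < jtpR q c n := by
  obtain ⟨hc1, hc2⟩ := abs_le.mp hc
  have ha0 : 0 < q^(2*n+1) := pow_pos hq0 _
  have ha1 : q^(2*n+1) < 1 := pow_lt_one₀ hq0.le hq1 (by omega)
  have hA1 : q^(2*(n+1)) < 1 := pow_lt_one₀ hq0.le hq1 (by omega)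
  have hsq : q^(2*(2*n+1)) = (q^(2*n+1))^2 := by
    rw [show 2*(2*n+1) = (2*n+1)*2 by ring, pow_mul]
  apply mul_pos (by linarith)
  rw [hsq]
  nlinarith [sq_nonneg (1 - q^(2*n+1))]

lemma jtpR_sub_one (n : ℕ) : |jtpR q c n - 1| ≤ 7 * q^(n+1) := by
  obtain ⟨hc1, hc2⟩ := abs_le.mp hc
  set A := q^(2*(n+1)) with hA
  set B := q^(2*(2*n+1)) with hB
  set a := q^(2*n+1) with ha
  have bnd : ∀ m : ℕ, n + 1 ≤ m → q ^ m ≤ q^(n+1) :=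
    fun m hm => pow_le_pow_of_le_one hq0.le hq1.le hm
  have hA' : A ≤ q^(n+1) := bnd _ (by omega)
  have hB' : B ≤ q^(n+1) := bnd _ (by omega)
  have ha' : a ≤ q^(n+1) := bnd _ (by omega)
  have hA0 : 0 ≤ A := by positivity
  have hB0 : 0 ≤ B := by positivity
  have ha0 : 0 ≤ a := by positivity
  have hA1 : A ≤ 1 := (hA' ).trans (pow_le_one₀ hq0.le hq1.le)
  have ha1 : a ≤ 1 := (ha').trans (pow_le_one₀ hq0.le hq1.le)
  have hB1 : B ≤ 1 := (hB').trans (pow_le_one₀ hq0.le hq1.le)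
  have hAB : A * B ≤ q^(n+1) :=
    le_trans (mul_le_mul hA' hB1 hB0 (by positivity)) (le_of_eq (mul_one _))
  have hAa : A * a ≤ q^(n+1) :=
    le_trans (mul_le_mul hA' ha1 ha0 (by positivity)) (le_of_eq (mul_one _))
  have expand : jtpR q c n - 1 = -A + B + 2*a*c - A*B - 2*A*a*c := by
    rw [jtpR]; ring
  rw [expand]
  rw [abs_le]
  constructor
  · nlinarith [mul_nonneg ha0 (by linarith : (0:ℝ) ≤ 1 + c),
      mul_nonneg (mul_nonneg hA0 ha0) (by linarith : (0:ℝ) ≤ 1 - c)]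
  · nlinarith [mul_nonneg ha0 (by linarith : (0:ℝ) ≤ 1 - c),
      mul_nonneg (mul_nonneg hA0 ha0) (by linarith : (0:ℝ) ≤ 1 + c),
      mul_nonneg hA0 hB0]

lemma jtpR_ge (n : ℕ) : (1-q^2)*(1-q)^2 ≤ jtpR q c n := by
  obtain ⟨hc1, hc2⟩ := abs_le.mp hc
  have ha0 : 0 < q^(2*n+1) := pow_pos hq0 _
  have ha' : q^(2*n+1) ≤ q := pow_le_of_le_one hq0.le hq1.le (by omega)
  have hA' : q^(2*(n+1)) ≤ q^2 := pow_le_pow_of_le_one hq0.le hq1.le (by omega)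
  have hsq : q^(2*(2*n+1)) = (q^(2*n+1))^2 := by
    rw [show 2*(2*n+1) = (2*n+1)*2 by ring, pow_mul]
  have h2 : (1-q)^2 ≤ 1 + q^(2*(2*n+1)) + 2*q^(2*n+1)*c := by
    rw [hsq]
    nlinarith [sq_nonneg (q - q^(2*n+1)), mul_nonneg ha0.le (by linarith : (0:ℝ) ≤ 1 + c)]
  have h1 : 1 - q^2 ≤ 1 - q^(2*(n+1)) := by linarith
  apply mul_le_mul h1 h2 (by positivity) (by nlinarith)

set_option maxHeartbeats 1000000 in
lemma jtpR_summable_log : Summable (fun n => Real.log (jtpR q c n)) := by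
  set δ := (1-q^2)*(1-q)^2 with hδ
  have hδ0 : 0 < δ := by
    have h1 : 0 < 1 - q^2 := by nlinarith
    have h2 : (0:ℝ) < (1-q)^2 := pow_pos (by linarith) 2
    exact mul_pos h1 h2
  have hδ1 : δ < 1 := by
    have h2 : (1-q)^2 < 1 := by nlinarith
    have h1 : 1 - q^2 ≤ 1 := by nlinarith
    have h3 : δ ≤ (1-q)^2 := mul_le_of_le_one_left (by positivity) h1
    linarith
  rw [← summable_abs_iff]
  have hgeo : Summable (fun n : ℕ => δ⁻¹ * (7 * q^(n+1))) := by
    apply Summable.mul_left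
    apply Summable.mul_left
    exact ((summable_geometric_of_lt_one hq0.le hq1).mul_left q).congr (by
      intro j; rw [pow_succ, mul_comm])
  apply hgeo.of_nonneg_of_le (fun n => abs_nonneg _) (fun n => ?_)
  · have hR0 := jtpR_pos hq0 hq1 hc n
    have hRδ := jtpR_ge hq0 hq1 hc n
    have hsub := jtpR_sub_one hq0 hq1 hc n
    have hup : Real.log (jtpR q c n) ≤ δ⁻¹ * (7 * q^(n+1)) := by
      calc Real.log (jtpR q c n) ≤ jtpR q c n - 1 := Real.log_le_sub_one_of_pos hR0
        _ ≤ |jtpR q c n - 1| := le_abs_self _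
        _ ≤ 7 * q^(n+1) := hsub
        _ ≤ δ⁻¹ * (7 * q^(n+1)) := by
            nlinarith [(one_le_inv₀ hδ0).mpr hδ1.le, pow_pos hq0 (n+1)]
    have hlo : -(δ⁻¹ * (7 * q^(n+1))) ≤ Real.log (jtpR q c n) := by
      have h1 : 1 - (jtpR q c n)⁻¹ ≤ Real.log (jtpR q c n) :=
        Real.one_sub_inv_le_log_of_pos hR0
      have h2 : (jtpR q c n)⁻¹ - 1 ≤ δ⁻¹ * (7 * q^(n+1)) := by
        rw [inv_eq_one_div, div_sub' hR0.ne', div_le_iff₀ hR0]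
        calc 1 - jtpR q c n * 1 ≤ |jtpR q c n - 1| := by
              rw [mul_one]
              cases abs_cases (jtpR q c n - 1) with
              | inl h => linarith [h.1, h.2]
              | inr h => linarith [h.1]
            _ ≤ 7 * q^(n+1) := hsub
            _ = δ⁻¹ * (7*q^(n+1)) * δ := by field_simp
            _ ≤ δ⁻¹ * (7*q^(n+1)) * jtpR q c n := by
              apply mul_le_mul_of_nonneg_left hRδ
              positivity
      linarith
    rw [abs_le]
    exact ⟨hlo, hup⟩

lemma jtpR_hasProd : HasProd (jtpR q c) (∏' n, jtpR q c n) := by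
  exact (Real.multipliable_of_summable_log (fun n => jtpR_pos hq0 hq1 hc n)
    (jtpR_summable_log hq0 hq1 hc)).hasProd

lemma jtpR_complex {w : ℂ} (hw : w ≠ 0) (hwc : w + w⁻¹ = 2*(c:ℂ)) (n : ℕ) :
    ((jtpR q c n : ℝ) : ℂ)
    = (1 - (q:ℂ)^(2*(n+1))) * ((1 + (q:ℂ)^(2*n+1) * w) * (1 + (q:ℂ)^(2*n+1) * w⁻¹)) := by
  have key : (1 + (q:ℂ)^(2*n+1) * w) * (1 + (q:ℂ)^(2*n+1) * w⁻¹)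
      = 1 + (q:ℂ)^(2*n+1) * (w + w⁻¹) + ((q:ℂ)^(2*n+1))^2 * (w * w⁻¹) := by ring
  rw [key, hwc, mul_inv_cancel₀ hw, mul_one, jtpR]
  push_cast
  ring
end Rlemmas

lemma jtp_main {q : ℝ} (hq0 : 0 < q) (hq1 : q < 1) {w : ℂ} (hw : w ≠ 0) (hw1 : ‖w‖ = 1)
    {c : ℝ} (hc : |c| ≤ 1) (hwc : w + w⁻¹ = 2*(c:ℂ)) :
    ((∏' n, jtpR q c n : ℝ) : ℂ) = ∑' n : ℤ, (q:ℂ)^(n.natAbs^2) * w^n := by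
  have hf := jtpR_complex hq0 hq1 hc hw hwc
  have hP : HasProd (fun n : ℕ => ((jtpR q c n : ℝ):ℂ)) ((∏' n, jtpR q c n : ℝ):ℂ) := by
    exact (jtpR_hasProd hq0 hq1 hc).map Complex.ofRealHom Complex.continuous_ofReal
  have h1 : Tendsto (fun N => ∏ j ∈ range N, ((jtpR q c j : ℝ):ℂ)) atTop
      (nhds ((∏' n, jtpR q c n : ℝ):ℂ)) := hP.tendsto_prod_nat
  have h2 : Tendsto (fun N => ∏ j ∈ range N, ((jtpR q c j : ℝ):ℂ)) atTop
      (nhds (∑' n : ℤ, (q:ℂ)^(n.natAbs^2) * w^n)) := by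
    have heq : (fun N => ∏ j ∈ range N, ((jtpR q c j : ℝ):ℂ))
        = fun N => ∑' n : ℤ, jtpc q w N n := by
      funext N
      rw [Finset.prod_congr rfl (fun j _ => hf j), jtp_finite hq0 hq1 hw N, ← jtpc_tsum]
    rw [heq]
    exact tendsto_tsum_of_dominated_convergence (jtp_summable_bound hq0 hq1)
      (fun n => jtpc_tendsto hq0 hq1 n)
      (Filter.Eventually.of_forall fun N n => jtpc_bound hq0 hq1 hw1 N n)
  exact tendsto_nhds_unique h1 h2

theorem theta_triple_product (X Y : ℝ) (hX : 0 < X) :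
    (∑' n : ℤ, Real.exp (-π * (n : ℝ)^2 * X) * Real.cos (2 * π * (n : ℝ) * Y))
    = ∏' n : ℕ, (1 - Real.exp (-2 * π * ((n : ℝ) + 1) * X)) *
        (1 + Real.exp (-2 * (2 * ((n : ℝ) + 1) - 1) * π * X)
          + 2 * Real.exp (-(2 * ((n : ℝ) + 1) - 1) * π * X) * Real.cos (2 * π * Y)) := by
  have hpi := Real.pi_pos
  set q : ℝ := rexp (-π * X) with hqdef
  have hq0 : 0 < q := Real.exp_pos _
  have hq1 : q < 1 := by
    rw [hqdef, Real.exp_lt_one_iff]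
    nlinarith
  set c : ℝ := Real.cos (2*π*Y) with hcdef
  have hc : |c| ≤ 1 := Real.abs_cos_le_one _
  set w : ℂ := Complex.exp (((2*π*Y : ℝ) : ℂ) * Complex.I) with hwdef
  have hw : w ≠ 0 := Complex.exp_ne_zero _
  have hw1 : ‖w‖ = 1 := by
    rw [hwdef, Complex.norm_exp]
    simp
  have hwc : w + w⁻¹ = 2*(c:ℂ) := by
    rw [hwdef, ← Complex.exp_neg, Complex.exp_mul_I]
    have hneg : -(((2*π*Y : ℝ):ℂ) * Complex.I) = ((-(2*π*Y) : ℝ):ℂ) * Complex.I := by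
      push_cast; ring
    rw [hneg, Complex.exp_mul_I, hcdef, Complex.ofReal_cos, Complex.ofReal_neg,
      Complex.cos_neg, Complex.sin_neg]
    ring
  -- exponent rewriting helpers
  have hexp : ∀ m : ℕ, rexp (-((m:ℝ)) * π * X) = q ^ m := by
    intro m
    rw [hqdef, ← Real.exp_nat_mul]
    congr 1
    ring
  -- RHS
  have hRHS : (∏' n : ℕ, (1 - Real.exp (-2 * π * ((n : ℝ) + 1) * X)) *
        (1 + Real.exp (-2 * (2 * ((n : ℝ) + 1) - 1) * π * X)
          + 2 * Real.exp (-(2 * ((n : ℝ) + 1) - 1) * π * X) * Real.cos (2 * π * Y)))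
      = ∏' n, jtpR q c n := by
    apply tprod_congr
    intro n
    rw [jtpR, ← hexp (2*(n+1)), ← hexp (2*(2*n+1)), ← hexp (2*n+1), ← hcdef]
    have e1 : -2 * π * ((n : ℝ) + 1) * X = -((2*(n+1) : ℕ):ℝ) * π * X := by push_cast; ring
    have e2 : -2 * (2 * ((n : ℝ) + 1) - 1) * π * X = -((2*(2*n+1) : ℕ):ℝ) * π * X := by
      push_cast; ring
    have e3 : -(2 * ((n : ℝ) + 1) - 1) * π * X = -((2*n+1 : ℕ):ℝ) * π * X := by
      push_cast; ring
    rw [e1, e2, e3]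
  -- LHS
  have hsummand : ∀ n : ℤ, rexp (-π * (n:ℝ)^2 * X) = q ^ (n.natAbs^2) := by
    intro n
    rw [← hexp (n.natAbs^2)]
    congr 1
    push_cast [Nat.cast_natAbs]
    rw [sq_abs]
    ring
  have hnorm : ∀ n : ℤ, ‖(q:ℂ)^(n.natAbs^2) * w^n‖ = q^(n.natAbs^2) := by
    intro n
    rw [norm_mul, norm_pow, norm_zpow, hw1, one_zpow, mul_one, Complex.norm_real,
      Real.norm_eq_abs, abs_of_pos hq0]
  have hsumS : Summable (fun n : ℤ => (q:ℂ)^(n.natAbs^2) * w^n) := by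
    apply Summable.of_norm
    exact (jtp_summable_pow hq0 hq1).congr (fun n => (hnorm n).symm)
  set S := ∑' n : ℤ, (q:ℂ)^(n.natAbs^2) * w^n with hS
  have hwn : ∀ n : ℤ, w^(n:ℤ) = Complex.exp (((2*π*(n:ℝ)*Y : ℝ):ℂ) * Complex.I) := by
    intro n
    rw [hwdef, ← Complex.exp_int_mul]
    congr 1
    push_cast; ring
  have hcosn : ∀ n : ℤ, w^(n:ℤ) + w^(-n) = 2*((Real.cos (2*π*(n:ℝ)*Y) : ℝ):ℂ) := by
    intro n
    have h2 : w^(-n) = Complex.exp (((-(2*π*(n:ℝ)*Y) : ℝ):ℂ) * Complex.I) := by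
      rw [hwdef, ← Complex.exp_int_mul]; congr 1; push_cast; ring
    rw [hwn n, h2, Complex.exp_mul_I, Complex.exp_mul_I, Complex.ofReal_neg, Complex.cos_neg,
      Complex.sin_neg, Complex.ofReal_cos]
    ring
  have hSneg : ∑' n : ℤ, ((q:ℂ)^(n.natAbs^2) * w^(-n)) = S := by
    rw [hS]
    rw [← (Equiv.neg ℤ).tsum_eq (fun n : ℤ => (q:ℂ)^(n.natAbs^2) * w^n)]
    apply tsum_congr
    intro n
    simp [Int.natAbs_neg]
  have hsumS' : Summable (fun n : ℤ => (q:ℂ)^(n.natAbs^2) * w^(-n)) := by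
    have h := (Equiv.neg ℤ).summable_iff.mpr hsumS
    apply h.congr
    intro n
    simp [Int.natAbs_neg]
  have hLHS : ((∑' n : ℤ, rexp (-π * (n:ℝ)^2 * X) * Real.cos (2*π*(n:ℝ)*Y) : ℝ) : ℂ) = S := by
    rw [Complex.ofReal_tsum]
    have hterm : ∀ n : ℤ, ((rexp (-π * (n:ℝ)^2 * X) * Real.cos (2*π*(n:ℝ)*Y) : ℝ) : ℂ)
        = ((q:ℂ)^(n.natAbs^2) * w^n + (q:ℂ)^(n.natAbs^2) * w^(-n)) / 2 := by
      intro n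
      rw [Complex.ofReal_mul, hsummand n, Complex.ofReal_pow, ← mul_add, hcosn n]
      ring
    rw [tsum_congr hterm, tsum_div_const, Summable.tsum_add hsumS hsumS', hSneg, ← hS]
    ring
  have hmain := jtp_main hq0 hq1 hw hw1 hc hwc
  apply Complex.ofReal_injective
  rw [hLHS, hRHS, hmain, hS]
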